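/- Let f:D→ℝ be strongly tree-submodular and K = max_i |D_i|. If x^0, x^1, …, x^m is a sequence in D such that for each t, x^{t+1} is a minimizer of f over INWARD(x^t) and f(x^{t+1}) < f(x^t), then m ≤ K. (The inward steepest-descent phase performs at most K cost-decreasing steps.) -/

import Mathlib

/-- A finite rooted tree on vertex set `V`, encoded by its root, the parent function
(with `parent root = root`) and the depth function (distance to the root). -/
structure RTree (V : Type*) where
  root : V
  parent : V → V
  depth : V → ℕ
  parent_root : parent root = root
  depth_root : depth root = 0
  depth_parent : ∀ v, v ≠ root → depth (parent v) + 1 = depth v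

namespace RTree

variable {V : Type*} (T : RTree V)

/-- `a ⪯ b` : `a` is an ancestor of `b`, i.e. `a` lies on the path from `b` to the root. -/
def anc (a b : V) : Prop := ∃ k : ℕ, T.parent^[k] b = a

theorem iterate_depth_aux : ∀ (n : ℕ) (v : V), T.depth v = n → T.parent^[n] v = T.root := by
  intro n
  induction n with
  | zero =>
    intro v hn
    by_cases hv : v = T.root
    · simp [hv]
    · have := T.depth_parent v hv; omega
  | succ n ih =>
    intro v hn
    have hv : v ≠ T.root := by
      intro h; rw [h, T.depth_root] at hn; omega
    have h := T.depth_parent v hv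
    rw [Function.iterate_succ_apply]
    exact ih (T.parent v) (by omega)

theorem iterate_depth (v : V) : T.parent^[T.depth v] v = T.root :=
  T.iterate_depth_aux (T.depth v) v rfl

theorem anc_root (b : V) : T.anc T.root b := ⟨T.depth b, T.iterate_depth b⟩

theorem exists_lcaIndex (a b : V) : ∃ k : ℕ, T.anc (T.parent^[k] a) b :=
  ⟨T.depth a, by rw [T.iterate_depth a]; exact T.anc_root b⟩

open Classical in
/-- The highest common ancestor of `a` and `b` : the deepest vertex that is an ancestor
of both `a` and `b` (i.e. the unique vertex of the path `P[a→b]` that is an ancestor of both). -/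
noncomputable def lca (a b : V) : V := T.parent^[Nat.find (T.exists_lcaIndex a b)] a

/-- `ρ(a,b)` : the number of edges of the unique path `P[a→b]` from `a` to `b`. -/
noncomputable def dist (a b : V) : ℕ :=
  (T.depth a - T.depth (T.lca a b)) + (T.depth b - T.depth (T.lca a b))

open Classical in
/-- `P[a→b, d]` : the `d`-th vertex of the path from `a` to `b` (first the ascending part
from `a` to the highest common ancestor, then the descending part towards `b`);
by convention it equals `b` for `d > ρ(a,b)`. -/
noncomputable def pathVertex (a b : V) (d : ℕ) : V :=
  if T.dist a b ≤ d then b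
  else if d ≤ T.depth a - T.depth (T.lca a b) then T.parent^[d] a
  else T.parent^[T.dist a b - d] b

open Classical in
/-- `a ⊓ b` : the member of `{P[a→b,⌊ρ(a,b)/2⌋], P[a→b,⌈ρ(a,b)/2⌉]}` that is an
ancestor of the other one. -/
noncomputable def cap (a b : V) : V :=
  if T.anc (T.pathVertex a b (T.dist a b / 2)) (T.pathVertex a b ((T.dist a b + 1) / 2))
  then T.pathVertex a b (T.dist a b / 2)
  else T.pathVertex a b ((T.dist a b + 1) / 2)

open Classical in
/-- `a ⊔ b` : the member of `{P[a→b,⌊ρ(a,b)/2⌋], P[a→b,⌈ρ(a,b)/2⌉]}` that is a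
descendant of the other one. -/
noncomputable def cup (a b : V) : V :=
  if T.anc (T.pathVertex a b (T.dist a b / 2)) (T.pathVertex a b ((T.dist a b + 1) / 2))
  then T.pathVertex a b ((T.dist a b + 1) / 2)
  else T.pathVertex a b (T.dist a b / 2)

/-- `a ∧ b` : the highest common ancestor of `a` and `b`. -/
noncomputable def meet (a b : V) : V := T.lca a b

/-- `a ∨ b` : the unique vertex of `P[a→b]` with `ρ(a, a∨b) = ρ(a∧b, b)`. -/
noncomputable def join (a b : V) : V :=
  T.pathVertex a b (T.depth b - T.depth (T.lca a b))

/-- `a ↑^d b = P[a→b,d] ∧ b`. -/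
noncomputable def up (d : ℕ) (a b : V) : V := T.meet (T.pathVertex a b d) b

/-- `a ↓_d b = P[a→b, ρ(a ↑^d b, b)]`. -/
noncomputable def down (d : ℕ) (a b : V) : V :=
  T.pathVertex a b (T.dist (T.up d a b) b)

end RTree

section Product

variable {ι : Type*} {V : ι → Type*}

/-- `f` is strongly tree-submodular w.r.t. the trees `T i`:
`f(x) + f(y) ≥ f(x ⊓ y) + f(x ⊔ y)`, the operations acting componentwise. -/
def StronglyTreeSubmodular (T : ∀ i, RTree (V i)) (f : (∀ i, V i) → ℝ) : Prop :=
  ∀ x y : ∀ i, V i,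
    f (fun i => (T i).cap (x i) (y i)) + f (fun i => (T i).cup (x i) (y i)) ≤ f x + f y

/-- `INWARD(x) = { y ∈ NEIB(x) : y ⪯ x }`, where `NEIB(x) = {y : max_i ρ(x_i,y_i) ≤ 1}`. -/
def inward (T : ∀ i, RTree (V i)) (x : ∀ i, V i) : Set (∀ i, V i) :=
  {y | (∀ i, (T i).dist (x i) (y i) ≤ 1) ∧ ∀ i, (T i).anc (y i) (x i)}

/-- `OUTWARD(x) = { y ∈ NEIB(x) : x ⪯ y }`. -/
def outward (T : ∀ i, RTree (V i)) (x : ∀ i, V i) : Set (∀ i, V i) :=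
  {y | (∀ i, (T i).dist (x i) (y i) ≤ 1) ∧ ∀ i, (T i).anc (x i) (y i)}

end Product

/- ===== auxiliary lemmas ===== -/
namespace RTree
variable {V : Type*} (T : RTree V)

theorem depth_parent_le (v : V) : T.depth (T.parent v) ≤ T.depth v := by
  by_cases hv : v = T.root
  · subst hv; rw [T.parent_root]
  · have := T.depth_parent v hv; omega

theorem depth_iterate_le (l : ℕ) (v : V) : T.depth (T.parent^[l] v) ≤ T.depth v := by
  induction l with
  | zero => simp
  | succ n ih =>
    rw [Function.iterate_succ_apply']
    exact (T.depth_parent_le _).trans ih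

theorem depth_iterate_eq {l : ℕ} {v : V} (h : l ≤ T.depth v) :
    T.depth (T.parent^[l] v) = T.depth v - l := by
  induction l generalizing v with
  | zero => simp
  | succ n ih =>
    have hv : v ≠ T.root := by
      intro hr; subst hr; rw [T.depth_root] at h; omega
    have hd := T.depth_parent v hv
    rw [Function.iterate_succ_apply]
    rw [ih (by omega)]
    omega

theorem anc_depth_le {c b : V} (h : T.anc c b) : T.depth c ≤ T.depth b := by
  obtain ⟨l, rfl⟩ := h
  exact T.depth_iterate_le l b

theorem anc_refl (a : V) : T.anc a a := ⟨0, rfl⟩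

theorem anc_parent (a : V) : T.anc (T.parent a) a := ⟨1, rfl⟩

theorem iterate_root (l : ℕ) : T.parent^[l] T.root = T.root := by
  induction l with
  | zero => rfl
  | succ n ih => rw [Function.iterate_succ_apply, T.parent_root, ih]

theorem iterate_of_depth_le {l : ℕ} {v : V} (h : T.depth v ≤ l) :
    T.parent^[l] v = T.root := by
  obtain ⟨c, rfl⟩ := Nat.exists_eq_add_of_le h
  rw [add_comm, Function.iterate_add_apply, T.iterate_depth, T.iterate_root]

theorem iterate_min_depth (l : ℕ) (v : V) :
    T.parent^[l] v = T.parent^[min l (T.depth v)] v := by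
  rcases le_total l (T.depth v) with h | h
  · rw [min_eq_left h]
  · rw [min_eq_right h, T.iterate_depth, T.iterate_of_depth_le h]

open Classical in
theorem lca_iterate {j : ℕ} {a : V} (h : j ≤ T.depth a) :
    T.lca a (T.parent^[j] a) = T.parent^[j] a := by
  have hfind : Nat.find (T.exists_lcaIndex a (T.parent^[j] a)) = j := by
    rw [Nat.find_eq_iff]
    constructor
    · exact T.anc_refl _
    · intro k hk hanc
      have h1 := T.anc_depth_le hanc
      rw [T.depth_iterate_eq (by omega : k ≤ T.depth a),
        T.depth_iterate_eq h] at h1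
      omega
  rw [lca, hfind]

theorem dist_iterate {j : ℕ} {a : V} (h : j ≤ T.depth a) :
    T.dist a (T.parent^[j] a) = j := by
  rw [dist, T.lca_iterate h, T.depth_iterate_eq h]
  omega

theorem pathVertex_iterate {j : ℕ} {a : V} (h : j ≤ T.depth a) (d : ℕ) :
    T.pathVertex a (T.parent^[j] a) d = T.parent^[min d j] a := by
  rw [pathVertex, T.dist_iterate h, T.lca_iterate h, T.depth_iterate_eq h]
  rcases le_or_gt j d with hjd | hjd
  · rw [if_pos hjd, min_eq_right hjd]
  · rw [if_neg (by omega), if_pos (by omega), min_eq_left (by omega)]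

theorem cap_iterate {j : ℕ} {a : V} (h : j ≤ T.depth a) :
    T.cap a (T.parent^[j] a) = T.parent^[(j + 1) / 2] a := by
  have hp1 : T.pathVertex a (T.parent^[j] a) (T.dist a (T.parent^[j] a) / 2)
      = T.parent^[j / 2] a := by
    rw [T.dist_iterate h, T.pathVertex_iterate h, min_eq_left (by omega)]
  have hp2 : T.pathVertex a (T.parent^[j] a) ((T.dist a (T.parent^[j] a) + 1) / 2)
      = T.parent^[(j + 1) / 2] a := by
    rw [T.dist_iterate h, T.pathVertex_iterate h, min_eq_left (by omega)]
  rw [cap, hp1, hp2]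
  rcases Nat.even_or_odd j with he | ho
  · have h2 : j / 2 = (j + 1) / 2 := by
      obtain ⟨c, rfl⟩ := he; omega
    rw [h2, if_pos (T.anc_refl _)]
  · have h2 : (j + 1) / 2 = j / 2 + 1 := by
      obtain ⟨c, rfl⟩ := ho; omega
    have hne : ¬ T.anc (T.parent^[j / 2] a) (T.parent^[(j + 1) / 2] a) := by
      intro hanc
      have h1 := T.anc_depth_le hanc
      rw [T.depth_iterate_eq (by omega : j / 2 ≤ T.depth a),
        T.depth_iterate_eq (by omega : (j + 1) / 2 ≤ T.depth a)] at h1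
      omega
    rw [if_neg hne]

theorem cup_iterate {j : ℕ} {a : V} (h : j ≤ T.depth a) :
    T.cup a (T.parent^[j] a) = T.parent^[j / 2] a := by
  have hp1 : T.pathVertex a (T.parent^[j] a) (T.dist a (T.parent^[j] a) / 2)
      = T.parent^[j / 2] a := by
    rw [T.dist_iterate h, T.pathVertex_iterate h, min_eq_left (by omega)]
  have hp2 : T.pathVertex a (T.parent^[j] a) ((T.dist a (T.parent^[j] a) + 1) / 2)
      = T.parent^[(j + 1) / 2] a := by
    rw [T.dist_iterate h, T.pathVertex_iterate h, min_eq_left (by omega)]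
  rw [cup, hp1, hp2]
  rcases Nat.even_or_odd j with he | ho
  · have h2 : j / 2 = (j + 1) / 2 := by
      obtain ⟨c, rfl⟩ := he; omega
    rw [← h2, if_pos (T.anc_refl _), h2]
  · have h2 : (j + 1) / 2 = j / 2 + 1 := by
      obtain ⟨c, rfl⟩ := ho; omega
    have hne : ¬ T.anc (T.parent^[j / 2] a) (T.parent^[(j + 1) / 2] a) := by
      intro hanc
      have h1 := T.anc_depth_le hanc
      rw [T.depth_iterate_eq (by omega : j / 2 ≤ T.depth a),
        T.depth_iterate_eq (by omega : (j + 1) / 2 ≤ T.depth a)] at h1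
      omega
    rw [if_neg hne]

theorem cap_self (a : V) : T.cap a a = a := by
  have := T.cap_iterate (j := 0) (a := a) (Nat.zero_le _)
  simpa using this

theorem cup_self (a : V) : T.cup a a = a := by
  have := T.cup_iterate (j := 0) (a := a) (Nat.zero_le _)
  simpa using this

theorem depth_pos_of_ne_root {a : V} (h : a ≠ T.root) : 1 ≤ T.depth a := by
  have h2 := T.depth_parent a h; omega

theorem cap_parent {a : V} (h : a ≠ T.root) : T.cap a (T.parent a) = T.parent a := by
  have := T.cap_iterate (j := 1) (a := a) (T.depth_pos_of_ne_root h)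
  simpa using this

theorem cup_parent {a : V} (h : a ≠ T.root) : T.cup a (T.parent a) = a := by
  have := T.cup_iterate (j := 1) (a := a) (T.depth_pos_of_ne_root h)
  simpa using this

theorem two_le_depth {a : V} (h1 : a ≠ T.root) (h2 : T.parent a ≠ T.root) :
    2 ≤ T.depth a := by
  have e1 := T.depth_parent a h1
  have e2 := T.depth_parent _ h2
  omega

theorem cap_parent2 {a : V} (h1 : a ≠ T.root) (h2 : T.parent a ≠ T.root) :
    T.cap a (T.parent (T.parent a)) = T.parent a := by
  have h3 := T.cap_iterate (j := 2) (a := a) (T.two_le_depth h1 h2)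
  norm_num at h3
  exact h3

theorem cup_parent2 {a : V} (h1 : a ≠ T.root) (h2 : T.parent a ≠ T.root) :
    T.cup a (T.parent (T.parent a)) = T.parent a := by
  have h3 := T.cup_iterate (j := 2) (a := a) (T.two_le_depth h1 h2)
  norm_num at h3
  exact h3

theorem dist_self (a : V) : T.dist a a = 0 := by
  have := T.dist_iterate (j := 0) (a := a) (Nat.zero_le _)
  simpa using this

theorem dist_parent_le (a : V) : T.dist a (T.parent a) ≤ 1 := by
  by_cases h : a = T.root
  · rw [h, T.parent_root, T.dist_self]; exact Nat.zero_le _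
  · have h2 := T.dist_iterate (j := 1) (a := a) (T.depth_pos_of_ne_root h)
    simp only [Function.iterate_one] at h2
    omega

theorem eq_or_parent_of_inward_coord {a b : V}
    (hanc : T.anc b a) (hd : T.dist a b ≤ 1) :
    b = a ∨ (b = T.parent a ∧ a ≠ T.root) := by
  obtain ⟨l, rfl⟩ := hanc
  rw [T.iterate_min_depth] at hd ⊢
  set j := min l (T.depth a) with hj
  have hja : j ≤ T.depth a := min_le_right _ _
  rw [T.dist_iterate hja] at hd
  interval_cases j
  · left; rfl
  · right
    refine ⟨by simp, ?_⟩
    intro hr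
    have hz : T.depth a = 0 := by rw [hr, T.depth_root]
    omega

end RTree

section Aux


variable {ι : Type*} {V : ι → Type*}

theorem mem_inward_of (T : ∀ i, RTree (V i)) (x v : ∀ i, V i)
    (h : ∀ i, v i = x i ∨ v i = (T i).parent (x i)) : v ∈ inward T x := by
  refine ⟨fun i => ?_, fun i => ?_⟩
  · rcases h i with h1 | h1
    · rw [h1, (T i).dist_self]; exact Nat.zero_le _
    · rw [h1]; exact (T i).dist_parent_le _
  · rcases h i with h1 | h1
    · rw [h1]; exact (T i).anc_refl _
    · rw [h1]; exact (T i).anc_parent _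

/-- If every step of the inward steepest-descent phase strictly decreases `f`, then some
coordinate moves (to its parent) at every single step. -/
theorem exists_full_mover (T : ∀ i, RTree (V i)) (f : (∀ i, V i) → ℝ)
    (hf : StronglyTreeSubmodular T f) (m : ℕ) (hm : 0 < m) (x : ℕ → ∀ i, V i)
    (hstep : ∀ t < m, x (t + 1) ∈ inward T (x t) ∧
      (∀ y ∈ inward T (x t), f (x (t + 1)) ≤ f y) ∧ f (x (t + 1)) < f (x t)) :
    ∃ i, ∀ s < m, x (s + 1) i = (T i).parent (x s i) ∧ x s i ≠ (T i).root := by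
  classical
  set Mv : ℕ → ι → Prop :=
    fun s i => x (s + 1) i = (T i).parent (x s i) ∧ x s i ≠ (T i).root with hMv
  have step_fact : ∀ s < m, ∀ i, Mv s i ∨ x (s + 1) i = x s i := by
    intro s hs i
    obtain ⟨hin, -, -⟩ := hstep s hs
    rcases (T i).eq_or_parent_of_inward_coord (hin.2 i) (hin.1 i) with h | ⟨h1, h2⟩
    · right; exact h
    · left; exact ⟨h1, h2⟩
  by_contra hno0
  push_neg at hno0
  have hno : ∀ i, ∃ s, s < m ∧ ¬ Mv s i := by
    intro i
    obtain ⟨s, hs, h⟩ := hno0 i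
    exact ⟨s, hs, fun hM => hM.2 (h hM.1)⟩
  rcases eq_or_lt_of_le (show 1 ≤ m from hm) with hm1 | hm2
  · -- m = 1 : no coordinate moves at step 0, so x 1 = x 0, contradicting strictness
    have hx : x 1 = x 0 := by
      funext i
      obtain ⟨s, hs, hsM⟩ := hno i
      have hs0 : s = 0 := by omega
      subst hs0
      rcases step_fact 0 (by omega) i with h | h
      · exact absurd h hsM
      · exact h
    have := (hstep 0 (by omega)).2.2
    rw [hx] at this
    exact absurd this (lt_irrefl _)
  -- now m ≥ 2
  set N : ℕ → ι → Prop := fun s i => ∀ r, s ≤ r → r < m → Mv r i with hN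
  set e : ℕ → ∀ i, V i :=
    fun s i => if N s i then (T i).parent (x s i) else x s i with he
  have hN_succ : ∀ s i, N s i → N (s + 1) i := by
    intro s i h r hr hrm; exact h r (by omega) hrm
  have hN_mv : ∀ s i, s < m → N s i → Mv s i := fun s i hs h => h s le_rfl hs
  have hN_of : ∀ s i, Mv s i → N (s + 1) i → N s i := by
    intro s i hM h r hr hrm
    rcases eq_or_lt_of_le hr with h1 | h1
    · exact h1 ▸ hM
    · exact h r (by omega) hrm
  have hN1pause : ∀ i, N 1 i → x 1 i = x 0 i := by
    intro i h1
    obtain ⟨s, hs, hsM⟩ := hno i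
    have hs0 : s = 0 := by
      by_contra hs0
      exact hsM (h1 s (by omega) hs)
    subst hs0
    rcases step_fact 0 (by omega) i with h | h
    · exact absurd h hsM
    · exact h
  -- Claim A : the telescoping inequality
  have claimA : ∀ s, 1 ≤ s → s + 2 ≤ m →
      f (e s) + f (x (s + 1)) ≤ f (x s) + f (e (s + 1)) := by
    intro s hs1 hs2
    set v : ∀ i, V i :=
      fun i => if Mv s i ∨ N (s + 1) i then (T i).parent (x s i) else x s i with hv
    have hcap : (fun i => (T i).cap (x s i) (e (s + 1) i)) = v := by
      funext i
      by_cases hNi : N (s + 1) i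
      · have hMv1 : Mv (s + 1) i := hN_mv (s + 1) i (by omega) hNi
        by_cases hMi : Mv s i
        · -- moves at both s and s+1
          have he1 : e (s + 1) i = (T i).parent ((T i).parent (x s i)) := by
            simp only [he]
            rw [if_pos hNi, hMi.1]
          rw [he1]
          have hr2 : (T i).parent (x s i) ≠ (T i).root := hMi.1 ▸ hMv1.2
          rw [(T i).cap_parent2 hMi.2 hr2]
          simp only [hv]
          rw [if_pos (Or.inl hMi)]
        · -- pauses at s, moves at s+1
          have hxx : x (s + 1) i = x s i := by
            rcases step_fact s (by omega) i with h | h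
            · exact absurd h hMi
            · exact h
          have he1 : e (s + 1) i = (T i).parent (x s i) := by
            simp only [he]
            rw [if_pos hNi, hxx]
          have hroot : x s i ≠ (T i).root := hxx ▸ hMv1.2
          rw [he1, (T i).cap_parent hroot]
          simp only [hv]
          rw [if_pos (Or.inr hNi)]
      · by_cases hMi : Mv s i
        · have he1 : e (s + 1) i = (T i).parent (x s i) := by
            simp only [he]
            rw [if_neg hNi, hMi.1]
          rw [he1, (T i).cap_parent hMi.2]
          simp only [hv]
          rw [if_pos (Or.inl hMi)]
        · have hxx : x (s + 1) i = x s i := by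
            rcases step_fact s (by omega) i with h | h
            · exact absurd h hMi
            · exact h
          have he1 : e (s + 1) i = x s i := by
            simp only [he]
            rw [if_neg hNi, hxx]
          rw [he1, (T i).cap_self]
          simp only [hv]
          rw [if_neg (by tauto)]
    have hcup : (fun i => (T i).cup (x s i) (e (s + 1) i)) = e s := by
      funext i
      by_cases hNi : N (s + 1) i
      · have hMv1 : Mv (s + 1) i := hN_mv (s + 1) i (by omega) hNi
        by_cases hMi : Mv s i
        · have he1 : e (s + 1) i = (T i).parent ((T i).parent (x s i)) := by
            simp only [he]
            rw [if_pos hNi, hMi.1]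
          rw [he1]
          have hr2 : (T i).parent (x s i) ≠ (T i).root := hMi.1 ▸ hMv1.2
          rw [(T i).cup_parent2 hMi.2 hr2]
          simp only [he]
          rw [if_pos (hN_of s i hMi hNi)]
        · have hxx : x (s + 1) i = x s i := by
            rcases step_fact s (by omega) i with h | h
            · exact absurd h hMi
            · exact h
          have he1 : e (s + 1) i = (T i).parent (x s i) := by
            simp only [he]
            rw [if_pos hNi, hxx]
          have hroot : x s i ≠ (T i).root := hxx ▸ hMv1.2
          rw [he1, (T i).cup_parent hroot]
          simp only [he]
          rw [if_neg (fun hNs => hMi (hN_mv s i (by omega) hNs))]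
      · by_cases hMi : Mv s i
        · have he1 : e (s + 1) i = (T i).parent (x s i) := by
            simp only [he]
            rw [if_neg hNi, hMi.1]
          rw [he1, (T i).cup_parent hMi.2]
          simp only [he]
          rw [if_neg (fun hNs => hNi (hN_succ s i hNs))]
        · have hxx : x (s + 1) i = x s i := by
            rcases step_fact s (by omega) i with h | h
            · exact absurd h hMi
            · exact h
          have he1 : e (s + 1) i = x s i := by
            simp only [he]
            rw [if_neg hNi, hxx]
          rw [he1, (T i).cup_self]
          simp only [he]
          rw [if_neg (fun hNs => hNi (hN_succ s i hNs))]
    have hsub := hf (x s) (e (s + 1))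
    rw [hcap, hcup] at hsub
    have hvmem : v ∈ inward T (x s) := by
      apply mem_inward_of
      intro i
      simp only [hv]
      by_cases h : Mv s i ∨ N (s + 1) i
      · rw [if_pos h]; right; rfl
      · rw [if_neg h]; left; rfl
    have hsteep : f (x (s + 1)) ≤ f v := (hstep s (by omega)).2.1 v hvmem
    linarith
  -- Claim B : e 1 ∈ INWARD(x 0)
  have claimB : f (x 1) ≤ f (e 1) := by
    apply (hstep 0 (by omega)).2.1
    apply mem_inward_of
    intro i
    simp only [he]
    by_cases hNi : N 1 i
    · rw [if_pos hNi, hN1pause i hNi]; right; rfl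
    · rw [if_neg hNi]
      rcases step_fact 0 (by omega) i with h | h
      · right; exact h.1
      · left; exact h
  -- Claim C : e (m-1) = x m
  have claimC : e (m - 1) = x m := by
    funext i
    simp only [he]
    by_cases hNi : N (m - 1) i
    · rw [if_pos hNi]
      have hM := hN_mv (m - 1) i (by omega) hNi
      have : m - 1 + 1 = m := by omega
      rw [← hM.1, this]
    · rw [if_neg hNi]
      have hnM : ¬ Mv (m - 1) i := by
        intro hM
        apply hNi
        intro r hr hrm
        have : r = m - 1 := by omega
        exact this ▸ hM
      rcases step_fact (m - 1) (by omega) i with h | h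
      · exact absurd h hnM
      · have h1 : m - 1 + 1 = m := by omega
        rw [h1] at h
        exact h.symm
  -- telescope
  have tel : ∀ k, k ≤ m - 2 →
      f (x (m - 1)) + f (e (m - 1 - k)) ≤ f (e (m - 1)) + f (x (m - 1 - k)) := by
    intro k
    induction k with
    | zero =>
      intro _
      simp only [Nat.sub_zero]
      linarith
    | succ k ih =>
      intro hk
      have h1 := ih (by omega)
      have hA := claimA (m - 1 - (k + 1)) (by omega) (by omega)
      have hrw : m - 1 - (k + 1) + 1 = m - 1 - k := by omega
      rw [hrw] at hA
      linarith
  have htel := tel (m - 2) le_rfl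
  have h12 : m - 1 - (m - 2) = 1 := by omega
  rw [h12, claimC] at htel
  have hstrict := (hstep (m - 1) (by omega)).2.2
  have hmm : m - 1 + 1 = m := by omega
  rw [hmm] at hstrict
  linarith

end Aux

/-- The inward steepest-descent phase performs at most `K = max_i |D_i|`
cost-decreasing steps: if `x⁰, x¹, …, x^m` is a sequence such that each `x^{t+1}` is a
minimizer of `f` over `INWARD(x^t)` with `f(x^{t+1}) < f(x^t)`, then `m ≤ K`. -/
theorem inward_phase_at_most_K_steps {ι : Type*} [Fintype ι] {V : ι → Type*}
    [∀ i, Fintype (V i)] (T : ∀ i, RTree (V i)) (f : (∀ i, V i) → ℝ)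
    (hf : StronglyTreeSubmodular T f) (m : ℕ) (x : ℕ → ∀ i, V i)
    (hstep : ∀ t < m, x (t + 1) ∈ inward T (x t) ∧
      (∀ y ∈ inward T (x t), f (x (t + 1)) ≤ f y) ∧ f (x (t + 1)) < f (x t)) :
    m ≤ Finset.univ.sup fun i => Fintype.card (V i) := by
  rcases Nat.eq_zero_or_pos m with hm | hm
  · subst hm; exact Nat.zero_le _
  obtain ⟨i, hi⟩ := exists_full_mover T f hf m hm x hstep
  -- depth decreases by exactly 1 along the full mover
  have hdepth : ∀ s, s ≤ m → (T i).depth (x s i) + s = (T i).depth (x 0 i) := by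
    intro s
    induction s with
    | zero => intro _; omega
    | succ s ih =>
      intro hs
      obtain ⟨hmv, hroot⟩ := hi s (by omega)
      have hd := (T i).depth_parent (x s i) hroot
      rw [hmv]
      have := ih (by omega)
      omega
  have hmd : m ≤ (T i).depth (x 0 i) := by
    have := hdepth m le_rfl
    omega
  -- depth < card
  have hcard : (T i).depth (x 0 i) + 1 ≤ Fintype.card (V i) := by
    have hinj : Function.Injective
        (fun l : Fin ((T i).depth (x 0 i) + 1) => (T i).parent^[(l : ℕ)] (x 0 i)) := by
      intro l1 l2 hl
      have d1 := (T i).depth_iterate_eq (l := (l1 : ℕ)) (v := x 0 i) (by omega)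
      have d2 := (T i).depth_iterate_eq (l := (l2 : ℕ)) (v := x 0 i) (by omega)
      have : (T i).depth ((T i).parent^[(l1 : ℕ)] (x 0 i))
          = (T i).depth ((T i).parent^[(l2 : ℕ)] (x 0 i)) := congrArg (T i).depth hl
      have hl1 := l1.isLt
      have hl2 := l2.isLt
      apply Fin.ext
      omega
    calc (T i).depth (x 0 i) + 1 = Fintype.card (Fin ((T i).depth (x 0 i) + 1)) := by
          rw [Fintype.card_fin]
      _ ≤ Fintype.card (V i) := Fintype.card_le_of_injective _ hinj
  have hsup : Fintype.card (V i) ≤ Finset.univ.sup fun i => Fintype.card (V i) :=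
    Finset.le_sup (f := fun i => Fintype.card (V i)) (Finset.mem_univ i)
  omega
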